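/- Counterexample showing the chained estimator is biased: Define F : 2^{{1,2}} → ℝ by F(∅)=0, F({1})=-1/2, F({2})=0, F({1,2})=-1. Then F is submodular, its Lovász subgradient satisfies g(x₁,x₂) = (-1/2,-1/2) if x₁ ≥ x₂ and (-1,0) if x₁ < x₂; starting from x⁽⁰⁾=(0,0) with step 0 < η < 1, if g̃⁽⁰⁾=(0,-1) (a realization of the 1-sparse unbiased estimator of g(x⁽⁰⁾)) and x⁽¹⁾=(0,η), then for any random variable d̃ with E[d̃ | x⁽¹⁾] = g(x⁽¹⁾) - g(x⁽⁰⁾), the estimator g̃⁽¹⁾ = g̃⁽⁰⁾ + d̃ satisfies E[g̃⁽¹⁾ | x⁽¹⁾] = (-1/2,-1/2) ≠ (-1,0) = g(x⁽¹⁾). -/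

import Mathlib

open MeasureTheory Finset

/-- A set function on subsets of `Fin 2` is submodular (diminishing returns). -/
def Submodular (F : Finset (Fin 2) → ℝ) : Prop :=
  ∀ ⦃A B : Finset (Fin 2)⦄, A ⊆ B → ∀ i ∉ B,
    F (insert i A) - F A ≥ F (insert i B) - F B

lemma finset_fin2_cases (S : Finset (Fin 2)) :
    S = ∅ ∨ S = {0} ∨ S = {1} ∨ S = {0, 1} := by fin_cases S <;> simp <;> decide

/-- **Counterexample showing the chained estimator is biased.** With
`F(∅)=0, F({1})=-1/2, F({2})=0, F({1,2})=-1`, the function `F` is submodular, its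
Lovász subgradient is `(-1/2,-1/2)` for `x₁ ≥ x₂` and `(-1,0)` otherwise; starting
at `x⁽⁰⁾ = (0,0)` with realization `g̃⁽⁰⁾ = (0,-1)` and `x⁽¹⁾ = (0,η)`, any `d̃` with
`E[d̃ | x⁽¹⁾] = g(x⁽¹⁾) - g(x⁽⁰⁾)` yields `E[g̃⁽⁰⁾ + d̃ | x⁽¹⁾] = (-1/2,-1/2) ≠ g(x⁽¹⁾)`. -/
theorem chained_estimator_biased_counterexample (F : Finset (Fin 2) → ℝ)
    (h0 : F ∅ = 0) (h1 : F {0} = -1/2) (h2 : F {1} = 0) (h12 : F {0, 1} = -1)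
    (g : (Fin 2 → ℝ) → Fin 2 → ℝ)
    (hg : ∀ x : Fin 2 → ℝ, g x =
      if x 1 ≤ x 0 then ![F {0} - F ∅, F {0, 1} - F {0}]
      else ![F {0, 1} - F {1}, F {1} - F ∅])
    (η : ℝ) (hη0 : 0 < η) (hη1 : η < 1) :
    Submodular F ∧
    g (fun _ => 0) = ![-1/2, -1/2] ∧
    g ![0, η] = ![-1, 0] ∧
    ∀ (Ω : Type) (_ : MeasurableSpace Ω) (μ : Measure Ω),
      IsProbabilityMeasure μ →
      ∀ d : Ω → Fin 2 → ℝ, (∀ i, Integrable (fun ω => d ω i) μ) →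
      (∀ i, ∫ ω, d ω i ∂μ = g ![0, η] i - g (fun _ => 0) i) →
      ((fun i => ∫ ω, (![(0 : ℝ), -1] i + d ω i) ∂μ) = ![-1/2, -1/2] ∧
        (![-1/2, -1/2] : Fin 2 → ℝ) ≠ g ![0, η]) := by
  have hg0 : g (fun _ => 0) = ![-1/2, -1/2] := by
    rw [hg]; simp [h0, h1, h12]; norm_num
  have hg1 : g ![0, η] = ![-1, 0] := by
    rw [hg]
    simp [h0, h2, h12, Matrix.cons_val_one, Matrix.cons_val_zero, not_le.2 hη0,
      show ¬ (η ≤ 0) from not_le.2 hη0]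
  refine ⟨?_, hg0, hg1, ?_⟩
  · intro A B hAB i hiB
    rcases finset_fin2_cases A with rfl | rfl | rfl | rfl <;>
      rcases finset_fin2_cases B with rfl | rfl | rfl | rfl <;>
      fin_cases i <;>
      simp_all [- Finset.singleton_union, - Finset.union_singleton, Finset.subset_iff, Finset.insert_eq, show ({1} : Finset (Fin 2)) ∪ {0} = {0, 1} by decide, h0, h1, h2, h12] <;> norm_num
  · intro Ω _ μ hμ d hdint hdmean
    constructor
    · funext i
      rw [integral_add (integrable_const _) (hdint i), integral_const,
        hdmean i, hg0, hg1]
      simp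
      fin_cases i <;> norm_num
    · intro h
      rw [hg1] at h
      have := congrFun h 0
      norm_num at this
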